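/- Let a₁, a₂ ∈ [0,∞), b₂₁ ∈ (−∞,0], b₁₁, b₂₂ ∈ (0,∞), θ = 0, m, κ₁, κ₂ ∈ ℝ and y₁, y₂ ∈ [0,∞), x₀ ∈ ℝ, so that e₃(t) = x₀ + m·t − κ₁·∫₀ᵗ e₁(s) ds − κ₂·∫₀ᵗ e₂(s) ds. Then e₃(t)/t → m − κ₁·a₁/b₁₁ − κ₂·( a₂/b₂₂ − b₂₁·a₁/(b₁₁·b₂₂) ) as t → ∞, i.e., E(X_t) has linear polynomial growth. (This is a critical case of Proposition 3.1.) -/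

import Mathlib

open MeasureTheory Filter Real Set

lemma exp_mul_integral (b t : ℝ) (hb : b ≠ 0) :
    ∫ u in (0:ℝ)..t, Real.exp (b * u) = (Real.exp (b * t) - 1) / b := by
  have h : ∀ u ∈ Set.uIcc (0:ℝ) t,
      HasDerivAt (fun u => Real.exp (b * u) / b) (Real.exp (b * u)) u := by
    intro u _
    have h1 : HasDerivAt (fun u : ℝ => b * u) b u := by
      simpa using (hasDerivAt_id u).const_mul b
    have h2 := h1.exp.div_const b
    have h3 : Real.exp (b * u) * b / b = Real.exp (b * u) := by field_simp
    rwa [h3] at h2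
  rw [intervalIntegral.integral_eq_sub_of_hasDerivAt h
    ((Real.continuous_exp.comp (continuous_const.mul continuous_id)).intervalIntegrable 0 t)]
  simp [sub_div]

lemma id_exp_mul_integral (b t : ℝ) (hb : b ≠ 0) :
    ∫ u in (0:ℝ)..t, u * Real.exp (b * u) = ((b * t - 1) * Real.exp (b * t) + 1) / b ^ 2 := by
  have h : ∀ u ∈ Set.uIcc (0:ℝ) t,
      HasDerivAt (fun u => (b * u - 1) * Real.exp (b * u) / b ^ 2) (u * Real.exp (b * u)) u := by
    intro u _
    have h1 : HasDerivAt (fun u : ℝ => b * u) b u := by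
      simpa using (hasDerivAt_id u).const_mul b
    have h2 : HasDerivAt (fun u : ℝ => b * u - 1) b u := h1.sub_const 1
    have h3 := (h2.mul h1.exp).div_const (b ^ 2)
    have h4 : (b * Real.exp (b * u) + (b * u - 1) * (Real.exp (b * u) * b)) / b ^ 2
        = u * Real.exp (b * u) := by
      field_simp; ring
    rwa [h4] at h3
  rw [intervalIntegral.integral_eq_sub_of_hasDerivAt h
    ((continuous_id.mul (Real.continuous_exp.comp (continuous_const.mul continuous_id))).intervalIntegrable 0 t)]
  field_simp
  rw [mul_zero, Real.exp_zero]; ring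

lemma tendsto_exp_neg_mul (b : ℝ) (hb : 0 < b) :
    Tendsto (fun t : ℝ => Real.exp (-b * t)) atTop (nhds 0) := by
  have h1 : Tendsto (fun t : ℝ => b * t) atTop atTop :=
    Tendsto.const_mul_atTop hb tendsto_id
  have h2 := (Real.tendsto_exp_neg_atTop_nhds_zero).comp h1
  apply h2.congr
  intro t
  simp [Function.comp, neg_mul]

lemma tendsto_mul_exp_neg_mul (b : ℝ) (hb : 0 < b) :
    Tendsto (fun t : ℝ => t * Real.exp (-b * t)) atTop (nhds 0) := by
  have h1 : Tendsto (fun t : ℝ => b * t) atTop atTop :=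
    Tendsto.const_mul_atTop hb tendsto_id
  have h2 := ((Real.tendsto_pow_mul_exp_neg_atTop_nhds_zero 1).comp h1).const_mul (1/b)
  rw [mul_zero] at h2
  apply h2.congr
  intro t
  simp only [Function.comp, pow_one]
  rw [neg_mul]
  field_simp

lemma tendsto_div_linear (f g : ℝ → ℝ) (L : ℝ) {K : ℝ}
    (hg : Tendsto g atTop (nhds K))
    (heq : ∀ᶠ t in atTop, f t = L * t + g t) :
    Tendsto (fun t => f t / t) atTop (nhds L) := by
  have h0 : Tendsto (fun t : ℝ => g t / t) atTop (nhds 0) := by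
    have := hg.mul tendsto_inv_atTop_zero
    rw [mul_zero] at this
    exact this.congr fun t => (div_eq_mul_inv _ _).symm
  have h1 : Tendsto (fun t : ℝ => L + g t / t) atTop (nhds L) := by
    simpa using tendsto_const_nhds.add h0
  apply h1.congr'
  filter_upwards [heq, eventually_gt_atTop (0:ℝ)] with t ht ht0
  rw [ht]
  field_simp

set_option maxHeartbeats 2000000 in
theorem doubleHeston_critical_mean_X
    (a1 a2 b21 b11 b22 m κ1 κ2 y1 y2 x0 : ℝ)
    (ha1 : 0 ≤ a1) (ha2 : 0 ≤ a2) (hb21 : b21 ≤ 0)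
    (hb11 : 0 < b11) (hb22 : 0 < b22)
    (hy1 : 0 ≤ y1) (hy2 : 0 ≤ y2)
    (e1 e2 e3 : ℝ → ℝ)
    (he1 : ∀ t, 0 ≤ t →
      e1 t = y1 * Real.exp (-b11 * t) + a1 * ∫ u in (0:ℝ)..t, Real.exp (-b11 * u))
    (he2 : ∀ t, 0 ≤ t →
      e2 t = y2 * Real.exp (-b22 * t) + a2 * (∫ u in (0:ℝ)..t, Real.exp (-b22 * u))
        - b21 * ∫ s in (0:ℝ)..t, Real.exp (-b22 * (t - s)) * e1 s)
    (he3 : ∀ t, 0 ≤ t →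
      e3 t = x0 + m * t - κ1 * (∫ s in (0:ℝ)..t, e1 s) - κ2 * ∫ s in (0:ℝ)..t, e2 s) :
    Tendsto (fun t => e3 t / t) atTop
      (nhds (m - κ1 * a1 / b11 - κ2 * (a2 / b22 - b21 * a1 / (b11 * b22)))) := by
  have hb11' : b11 ≠ 0 := ne_of_gt hb11
  have hb22' : b22 ≠ 0 := ne_of_gt hb22
  have hb11n : -b11 ≠ 0 := neg_ne_zero.mpr hb11'
  have hb22n : -b22 ≠ 0 := neg_ne_zero.mpr hb22'
  have contE : ∀ c : ℝ, Continuous fun s : ℝ => Real.exp (c * s) :=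
    fun c => Real.continuous_exp.comp (continuous_const.mul continuous_id)
  -- closed form for e1
  have hE1 : ∀ t, 0 ≤ t →
      e1 t = (y1 - a1 / b11) * Real.exp (-b11 * t) + a1 / b11 := by
    intro t ht
    rw [he1 t ht, exp_mul_integral (-b11) t hb11n]
    field_simp
    ring
  -- integral of e1
  have hI1 : ∀ t, 0 ≤ t →
      (∫ s in (0:ℝ)..t, e1 s)
        = (a1 / b11) * t + (y1 - a1 / b11) * (1 - Real.exp (-b11 * t)) / b11 := by
    intro t ht
    have hcg : Set.EqOn e1
        (fun s => (y1 - a1 / b11) * Real.exp (-b11 * s) + a1 / b11) (Set.uIcc 0 t) := by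
      intro s hs
      rw [Set.uIcc_of_le ht] at hs
      exact hE1 s hs.1
    rw [intervalIntegral.integral_congr hcg,
      intervalIntegral.integral_add ((show Continuous fun s : ℝ => (y1 - a1 / b11) * Real.exp (-b11 * s) from (continuous_const.mul (contE (-b11)))).intervalIntegrable 0 t)
        (intervalIntegrable_const),
      intervalIntegral.integral_const_mul, exp_mul_integral (-b11) t hb11n,
      intervalIntegral.integral_const]
    simp only [smul_eq_mul, sub_zero]
    field_simp
    ring
  -- convolution integral
  have hC : ∀ t, 0 ≤ t →
      (∫ s in (0:ℝ)..t, Real.exp (-b22 * (t - s)) * e1 s)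
        = Real.exp (-b22 * t) * ((y1 - a1 / b11) * ∫ s in (0:ℝ)..t, Real.exp ((b22 - b11) * s))
          + (a1 / b11) * (1 - Real.exp (-b22 * t)) / b22 := by
    intro t ht
    have h2 : Real.exp (-b22 * t) ≠ 0 := Real.exp_ne_zero _
    have hcg : Set.EqOn (fun s => Real.exp (-b22 * (t - s)) * e1 s)
        (fun s => (Real.exp (-b22 * t) * (y1 - a1 / b11)) * Real.exp ((b22 - b11) * s)
          + ((a1 / b11) * Real.exp (-b22 * t)) * Real.exp (b22 * s)) (Set.uIcc 0 t) := by
      intro s hs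
      rw [Set.uIcc_of_le ht] at hs
      simp only
      rw [hE1 s hs.1, show -b22 * (t - s) = -b22 * t + b22 * s by ring, Real.exp_add,
        show (b22 - b11) * s = b22 * s + -b11 * s by ring, Real.exp_add]
      ring
    rw [intervalIntegral.integral_congr hcg,
      intervalIntegral.integral_add
        ((show Continuous fun s : ℝ => Real.exp (-b22 * t) * (y1 - a1 / b11) * Real.exp ((b22 - b11) * s) from (continuous_const.mul (contE (b22 - b11)))).intervalIntegrable 0 t)
        ((show Continuous fun s : ℝ => a1 / b11 * Real.exp (-b22 * t) * Real.exp (b22 * s) from (continuous_const.mul (contE b22))).intervalIntegrable 0 t),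
      intervalIntegral.integral_const_mul, intervalIntegral.integral_const_mul,
      exp_mul_integral b22 t hb22',
      show Real.exp (b22 * t) = (Real.exp (-b22 * t))⁻¹ by
        rw [← Real.exp_neg]; ring_nf]
    field_simp
  have hexp1 := tendsto_exp_neg_mul b11 hb11
  have hexp2 := tendsto_exp_neg_mul b22 hb22
  have htexp := tendsto_mul_exp_neg_mul b11 hb11
  rcases eq_or_ne b11 b22 with hbb | hbb
  · -- critical case b11 = b22
    subst hbb
    have hzero : ∀ t : ℝ, (∫ s in (0:ℝ)..t, Real.exp ((b11 - b11) * s)) = t := by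
      intro t; simp
    have hE2 : ∀ t, 0 ≤ t →
        e2 t = (y2 - a2 / b11 + b21 * (a1 / b11) / b11) * Real.exp (-b11 * t)
          + (-b21 * (y1 - a1 / b11)) * (t * Real.exp (-b11 * t))
          + (a2 / b11 - b21 * (a1 / b11) / b11) := by
      intro t ht
      rw [he2 t ht, exp_mul_integral (-b11) t hb11n, hC t ht, hzero t]
      field_simp
      ring
    have hI2 : ∀ t, 0 ≤ t →
        (∫ s in (0:ℝ)..t, e2 s)
          = (a2 / b11 - b21 * (a1 / b11) / b11) * t
            + ((y2 - a2 / b11 + b21 * (a1 / b11) / b11) * (1 - Real.exp (-b11 * t)) / b11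
              + (-b21 * (y1 - a1 / b11)) * (((-b11) * t - 1) * Real.exp (-b11 * t) + 1) / b11 ^ 2) := by
      intro t ht
      have hcg : Set.EqOn e2
          (fun s => ((y2 - a2 / b11 + b21 * (a1 / b11) / b11) * Real.exp (-b11 * s)
            + (-b21 * (y1 - a1 / b11)) * (s * Real.exp (-b11 * s)))
            + (a2 / b11 - b21 * (a1 / b11) / b11)) (Set.uIcc 0 t) := by
        intro s hs
        rw [Set.uIcc_of_le ht] at hs
        rw [hE2 s hs.1]
      rw [intervalIntegral.integral_congr hcg,
        intervalIntegral.integral_add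
          ((show Continuous fun s : ℝ => (y2 - a2 / b11 + b21 * (a1 / b11) / b11) * Real.exp (-b11 * s) + -b21 * (y1 - a1 / b11) * (s * Real.exp (-b11 * s)) from (continuous_const.mul (contE (-b11))).add
            (continuous_const.mul (continuous_id'.mul (contE (-b11))))).intervalIntegrable 0 t)
          intervalIntegrable_const,
        intervalIntegral.integral_add
          ((show Continuous fun s : ℝ => (y2 - a2 / b11 + b21 * (a1 / b11) / b11) * Real.exp (-b11 * s) from (continuous_const.mul (contE (-b11)))).intervalIntegrable 0 t)
          ((show Continuous fun s : ℝ => -b21 * (y1 - a1 / b11) * (s * Real.exp (-b11 * s)) from (continuous_const.mul (continuous_id'.mul (contE (-b11))))).intervalIntegrable 0 t),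
        intervalIntegral.integral_const_mul, intervalIntegral.integral_const_mul,
        exp_mul_integral (-b11) t hb11n, id_exp_mul_integral (-b11) t hb11n,
        intervalIntegral.integral_const]
      simp only [smul_eq_mul, sub_zero]
      field_simp
      ring
    have hg : Tendsto
        (fun t => (x0 - κ1 * ((y1 - a1 / b11) / b11)
            - κ2 * ((y2 - a2 / b11 + b21 * (a1 / b11) / b11) / b11
              + (-b21 * (y1 - a1 / b11)) / b11 ^ 2))
          + (κ1 * ((y1 - a1 / b11) / b11)
            + κ2 * ((y2 - a2 / b11 + b21 * (a1 / b11) / b11) / b11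
              + (-b21 * (y1 - a1 / b11)) / b11 ^ 2)) * Real.exp (-b11 * t)
          + (κ2 * (-b21 * (y1 - a1 / b11)) / b11) * (t * Real.exp (-b11 * t)))
        atTop (nhds ((x0 - κ1 * ((y1 - a1 / b11) / b11)
            - κ2 * ((y2 - a2 / b11 + b21 * (a1 / b11) / b11) / b11
              + (-b21 * (y1 - a1 / b11)) / b11 ^ 2))
          + (κ1 * ((y1 - a1 / b11) / b11)
            + κ2 * ((y2 - a2 / b11 + b21 * (a1 / b11) / b11) / b11
              + (-b21 * (y1 - a1 / b11)) / b11 ^ 2)) * 0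
          + (κ2 * (-b21 * (y1 - a1 / b11)) / b11) * 0)) :=
      (tendsto_const_nhds.add (hexp1.const_mul _)).add (htexp.const_mul _)
    refine tendsto_div_linear e3 _ _ hg ?_
    · filter_upwards [eventually_ge_atTop (0:ℝ)] with t ht
      rw [he3 t ht, hI1 t ht, hI2 t ht]
      field_simp
      ring
  · -- case b11 ≠ b22
    have hbbne : b22 - b11 ≠ 0 := sub_ne_zero.mpr hbb.symm
    have hE2 : ∀ t, 0 ≤ t →
        e2 t = (y2 - a2 / b22 + b21 * (y1 - a1 / b11) / (b22 - b11)
            + b21 * (a1 / b11) / b22) * Real.exp (-b22 * t)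
          + (-b21 * (y1 - a1 / b11) / (b22 - b11)) * Real.exp (-b11 * t)
          + (a2 / b22 - b21 * (a1 / b11) / b22) := by
      intro t ht
      have h2 : Real.exp (-b22 * t) ≠ 0 := Real.exp_ne_zero _
      rw [he2 t ht, exp_mul_integral (-b22) t hb22n, hC t ht,
        exp_mul_integral (b22 - b11) t hbbne,
        show Real.exp ((b22 - b11) * t) = Real.exp (-b11 * t) * (Real.exp (-b22 * t))⁻¹ by
          rw [← Real.exp_neg, ← Real.exp_add]; congr 1; ring]
      field_simp
      ring
    have hI2 : ∀ t, 0 ≤ t →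
        (∫ s in (0:ℝ)..t, e2 s)
          = (a2 / b22 - b21 * (a1 / b11) / b22) * t
            + ((y2 - a2 / b22 + b21 * (y1 - a1 / b11) / (b22 - b11)
                + b21 * (a1 / b11) / b22) * (1 - Real.exp (-b22 * t)) / b22
              + (-b21 * (y1 - a1 / b11) / (b22 - b11)) * (1 - Real.exp (-b11 * t)) / b11) := by
      intro t ht
      have hcg : Set.EqOn e2
          (fun s => ((y2 - a2 / b22 + b21 * (y1 - a1 / b11) / (b22 - b11)
              + b21 * (a1 / b11) / b22) * Real.exp (-b22 * s)
            + (-b21 * (y1 - a1 / b11) / (b22 - b11)) * Real.exp (-b11 * s))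
            + (a2 / b22 - b21 * (a1 / b11) / b22)) (Set.uIcc 0 t) := by
        intro s hs
        rw [Set.uIcc_of_le ht] at hs
        rw [hE2 s hs.1]
      rw [intervalIntegral.integral_congr hcg,
        intervalIntegral.integral_add
          ((show Continuous fun s : ℝ => (y2 - a2 / b22 + b21 * (y1 - a1 / b11) / (b22 - b11) + b21 * (a1 / b11) / b22) * Real.exp (-b22 * s) + -b21 * (y1 - a1 / b11) / (b22 - b11) * Real.exp (-b11 * s) from (continuous_const.mul (contE (-b22))).add
            (continuous_const.mul (contE (-b11)))).intervalIntegrable 0 t)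
          intervalIntegrable_const,
        intervalIntegral.integral_add
          ((show Continuous fun s : ℝ => (y2 - a2 / b22 + b21 * (y1 - a1 / b11) / (b22 - b11) + b21 * (a1 / b11) / b22) * Real.exp (-b22 * s) from (continuous_const.mul (contE (-b22)))).intervalIntegrable 0 t)
          ((show Continuous fun s : ℝ => -b21 * (y1 - a1 / b11) / (b22 - b11) * Real.exp (-b11 * s) from (continuous_const.mul (contE (-b11)))).intervalIntegrable 0 t),
        intervalIntegral.integral_const_mul, intervalIntegral.integral_const_mul,
        exp_mul_integral (-b22) t hb22n, exp_mul_integral (-b11) t hb11n,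
        intervalIntegral.integral_const]
      simp only [smul_eq_mul, sub_zero]
      field_simp
      ring
    have hg : Tendsto
        (fun t => (x0 - κ1 * ((y1 - a1 / b11) / b11)
            - κ2 * ((y2 - a2 / b22 + b21 * (y1 - a1 / b11) / (b22 - b11)
                + b21 * (a1 / b11) / b22) / b22
              + (-b21 * (y1 - a1 / b11) / (b22 - b11)) / b11))
          + (κ2 * ((y2 - a2 / b22 + b21 * (y1 - a1 / b11) / (b22 - b11)
                + b21 * (a1 / b11) / b22) / b22)) * Real.exp (-b22 * t)
          + (κ1 * ((y1 - a1 / b11) / b11)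
            + κ2 * ((-b21 * (y1 - a1 / b11) / (b22 - b11)) / b11)) * Real.exp (-b11 * t))
        atTop (nhds ((x0 - κ1 * ((y1 - a1 / b11) / b11)
            - κ2 * ((y2 - a2 / b22 + b21 * (y1 - a1 / b11) / (b22 - b11)
                + b21 * (a1 / b11) / b22) / b22
              + (-b21 * (y1 - a1 / b11) / (b22 - b11)) / b11))
          + (κ2 * ((y2 - a2 / b22 + b21 * (y1 - a1 / b11) / (b22 - b11)
                + b21 * (a1 / b11) / b22) / b22)) * 0
          + (κ1 * ((y1 - a1 / b11) / b11)
            + κ2 * ((-b21 * (y1 - a1 / b11) / (b22 - b11)) / b11)) * 0)) :=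
      (tendsto_const_nhds.add (hexp2.const_mul _)).add (hexp1.const_mul _)
    refine tendsto_div_linear e3 _ _ hg ?_
    · filter_upwards [eventually_ge_atTop (0:ℝ)] with t ht
      rw [he3 t ht, hI1 t ht, hI2 t ht]
      field_simp
      ring
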